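/- The 6-dimensional Lie algebra g with basis {a,b,c,d,e,f} and nonzero brackets [a,b]=c, [a,c]=d, [a,d]=e, [b,c]=e, [b,e]=f, [c,d]=-f is 5-step nilpotent (g^5 = 0, g^4 ≠ 0) but does not satisfy the identity SN_4 = 0; in particular [[a,b],[[a,b],a]] = f ≠ 0. -/
import Mathlib


noncomputable section

/-- Standard basis vector of `ℝ⁶`. -/
def e (k : Fin 6) : Fin 6 → ℝ := Pi.single k 1

/-- Structure constants table of the 6-dimensional Lie algebra `12346_E = g_{6,14}`:
`[a,b]=c, [a,c]=d, [a,d]=e, [b,c]=e, [b,e]=f, [c,d]=-f` (basis `a,…,f = e 0,…,e 5`),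
extended antisymmetrically. -/
def tbl : Fin 6 → Fin 6 → Fin 6 → ℝ :=
  ![![0, e 2, e 3, e 4, 0, 0],
    ![-e 2, 0, e 4, 0, e 5, 0],
    ![-e 3, -e 4, 0, -e 5, 0, 0],
    ![-e 4, 0, e 5, 0, 0, 0],
    ![0, -e 5, 0, 0, 0, 0],
    ![0, 0, 0, 0, 0, 0]]

/-- The bilinear bracket of `g_{6,14}`. -/
def br (x y : Fin 6 → ℝ) : Fin 6 → ℝ :=
  ∑ p : Fin 6, ∑ q : Fin 6, (x p * y q) • tbl p q

/-- Lower central series of a bracket: `C⁰ = ⊤`, `C^{j+1} = span {μ(u,v) : u ∈ C^j}`. -/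
def lcs (μ : (Fin 6 → ℝ) → (Fin 6 → ℝ) → (Fin 6 → ℝ)) : ℕ → Submodule ℝ (Fin 6 → ℝ)
  | 0 => ⊤
  | j + 1 => Submodule.span ℝ {w | ∃ u ∈ lcs μ j, ∃ v, w = μ u v}

section vec
variable {α : Type*} (a₀ a₁ a₂ a₃ a₄ a₅ : α)
lemma cv0 : ![a₀, a₁, a₂, a₃, a₄, a₅] 0 = a₀ := rfl
lemma cv1 : ![a₀, a₁, a₂, a₃, a₄, a₅] 1 = a₁ := rfl
lemma cv2 : ![a₀, a₁, a₂, a₃, a₄, a₅] 2 = a₂ := rfl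
lemma cv3 : ![a₀, a₁, a₂, a₃, a₄, a₅] 3 = a₃ := rfl
lemma cv4 : ![a₀, a₁, a₂, a₃, a₄, a₅] 4 = a₄ := rfl
lemma cv5 : ![a₀, a₁, a₂, a₃, a₄, a₅] 5 = a₅ := rfl
end vec

lemma e_eq (j : Fin 6) : e j = ![if j = 0 then 1 else 0, if j = 1 then 1 else 0,
    if j = 2 then 1 else 0, if j = 3 then 1 else 0, if j = 4 then 1 else 0,
    if j = 5 then 1 else 0] := by
  funext k; fin_cases k <;> fin_cases j <;>
    simp [e, Pi.single_apply, cv0, cv1, cv2, cv3, cv4, cv5]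

lemma br_eq (x y : Fin 6 → ℝ) : br x y =
    ![0, 0, x 0 * y 1 - x 1 * y 0, x 0 * y 2 - x 2 * y 0,
      x 0 * y 3 + x 1 * y 2 - x 2 * y 1 - x 3 * y 0,
      x 1 * y 4 - x 2 * y 3 + x 3 * y 2 - x 4 * y 1] := by
  funext k
  fin_cases k <;>
    simp only [br, tbl, e_eq, Fin.sum_univ_six, cv0, cv1, cv2, cv3, cv4, cv5,
      Pi.add_apply, Pi.smul_apply, Pi.neg_apply, Pi.zero_apply, Finset.sum_apply,
      smul_eq_mul, if_true, if_false] <;> simp [cv0, cv1, cv2, cv3, cv4, cv5] <;> ring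

lemma lcs_succ (μ) (j : ℕ) :
    lcs μ (j + 1) = Submodule.span ℝ {w | ∃ u ∈ lcs μ j, ∃ v, w = μ u v} := rfl

lemma l1 : ∀ u ∈ lcs br 1, u 0 = 0 ∧ u 1 = 0 := by
  intro u hu
  rw [lcs_succ] at hu
  induction hu using Submodule.span_induction with
  | mem w hw =>
    obtain ⟨u, -, v, rfl⟩ := hw
    rw [br_eq]; exact ⟨rfl, rfl⟩
  | zero => exact ⟨rfl, rfl⟩
  | add x y hx hy ihx ihy => exact ⟨by simp [ihx.1, ihy.1], by simp [ihx.2, ihy.2]⟩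
  | smul a x hx ih => exact ⟨by simp [ih.1], by simp [ih.2]⟩

lemma l2 : ∀ u ∈ lcs br 2, u 0 = 0 ∧ u 1 = 0 ∧ u 2 = 0 := by
  intro u hu
  rw [lcs_succ] at hu
  induction hu using Submodule.span_induction with
  | mem w hw =>
    obtain ⟨u, hu, v, rfl⟩ := hw
    obtain ⟨h0, h1⟩ := l1 u hu
    rw [br_eq]
    exact ⟨rfl, rfl, by simp [cv2, h0, h1]⟩
  | zero => exact ⟨rfl, rfl, rfl⟩
  | add x y hx hy ihx ihy =>
    exact ⟨by simp [ihx.1, ihy.1], by simp [ihx.2.1, ihy.2.1], by simp [ihx.2.2, ihy.2.2]⟩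
  | smul a x hx ih => exact ⟨by simp [ih.1], by simp [ih.2.1], by simp [ih.2.2]⟩

lemma l3 : ∀ u ∈ lcs br 3, u 0 = 0 ∧ u 1 = 0 ∧ u 2 = 0 ∧ u 3 = 0 := by
  intro u hu
  rw [lcs_succ] at hu
  induction hu using Submodule.span_induction with
  | mem w hw =>
    obtain ⟨u, hu, v, rfl⟩ := hw
    obtain ⟨h0, h1, h2⟩ := l2 u hu
    rw [br_eq]
    exact ⟨rfl, rfl, by simp [cv2, h0, h1], by simp [cv3, h0, h2]⟩
  | zero => exact ⟨rfl, rfl, rfl, rfl⟩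
  | add x y hx hy ihx ihy =>
    exact ⟨by simp [ihx.1, ihy.1], by simp [ihx.2.1, ihy.2.1],
      by simp [ihx.2.2.1, ihy.2.2.1], by simp [ihx.2.2.2, ihy.2.2.2]⟩
  | smul a x hx ih =>
    exact ⟨by simp [ih.1], by simp [ih.2.1], by simp [ih.2.2.1], by simp [ih.2.2.2]⟩

lemma l4 : ∀ u ∈ lcs br 4, u 0 = 0 ∧ u 1 = 0 ∧ u 2 = 0 ∧ u 3 = 0 ∧ u 4 = 0 := by
  intro u hu
  rw [lcs_succ] at hu
  induction hu using Submodule.span_induction with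
  | mem w hw =>
    obtain ⟨u, hu, v, rfl⟩ := hw
    obtain ⟨h0, h1, h2, h3⟩ := l3 u hu
    rw [br_eq]
    exact ⟨rfl, rfl, by simp [cv2, h0, h1], by simp [cv3, h0, h2],
      by simp [cv4, h0, h1, h2, h3]⟩
  | zero => exact ⟨rfl, rfl, rfl, rfl, rfl⟩
  | add x y hx hy ihx ihy =>
    exact ⟨by simp [ihx.1, ihy.1], by simp [ihx.2.1, ihy.2.1],
      by simp [ihx.2.2.1, ihy.2.2.1], by simp [ihx.2.2.2.1, ihy.2.2.2.1],
      by simp [ihx.2.2.2.2, ihy.2.2.2.2]⟩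
  | smul a x hx ih =>
    exact ⟨by simp [ih.1], by simp [ih.2.1], by simp [ih.2.2.1],
      by simp [ih.2.2.2.1], by simp [ih.2.2.2.2]⟩

/-- The Lie algebra `g_{6,14}` is a Lie algebra (Jacobi holds), is 5-step nilpotent
(`g⁵ = 0`, `g⁴ ≠ 0`), and does not satisfy `SN_4 = 0`: in particular
`[[a,b],[[a,b],a]] = f ≠ 0`. -/
theorem g614_five_step_not_SN4 :
    (∀ x y z : Fin 6 → ℝ, br (br x y) z + br (br y z) x + br (br z x) y = 0) ∧
    lcs br 5 = ⊥ ∧ lcs br 4 ≠ ⊥ ∧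
    br (br (e 0) (e 1)) (br (br (e 0) (e 1)) (e 0)) = e 5 ∧ e 5 ≠ 0 ∧
    ¬ (∀ x1 x2 x3 x4 x5 : Fin 6 → ℝ, br (br x1 x2) (br (br x3 x4) x5) = 0) := by
  have key : br (br (e 0) (e 1)) (br (br (e 0) (e 1)) (e 0)) = e 5 := by
    funext k
    fin_cases k <;>
      simp [br_eq, e_eq, cv0, cv1, cv2, cv3, cv4, cv5]
  have e5ne : e 5 ≠ 0 := by
    intro h
    have := congrFun h 5
    rw [e_eq] at this
    simp [cv5] at this
  refine ⟨?_, ?_, ?_, key, e5ne, ?_⟩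
  · intro x y z
    funext k
    fin_cases k <;>
      simp [br_eq, cv0, cv1, cv2, cv3, cv4, cv5] <;> ring
  · rw [lcs_succ, eq_bot_iff, Submodule.span_le]
    intro w hw
    obtain ⟨u, hu, v, rfl⟩ := hw
    obtain ⟨h0, h1, h2, h3, h4⟩ := l4 u hu
    have : br u v = 0 := by
      funext k
      fin_cases k <;>
        simp [br_eq, cv0, cv1, cv2, cv3, cv4, cv5, h0, h1, h2, h3, h4]
    simp [this]
  · intro hbot
    have m1 : br (e 0) (e 1) ∈ lcs br 1 := by
      rw [lcs_succ]
      exact Submodule.subset_span ⟨e 0, Submodule.mem_top, e 1, rfl⟩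
    have m2 : br (br (e 0) (e 1)) (e 0) ∈ lcs br 2 := by
      rw [lcs_succ]
      exact Submodule.subset_span ⟨_, m1, e 0, rfl⟩
    have m3 : br (br (br (e 0) (e 1)) (e 0)) (e 0) ∈ lcs br 3 := by
      rw [lcs_succ]
      exact Submodule.subset_span ⟨_, m2, e 0, rfl⟩
    have m4 : br (br (br (br (e 0) (e 1)) (e 0)) (e 0)) (e 1) ∈ lcs br 4 := by
      rw [lcs_succ]
      exact Submodule.subset_span ⟨_, m3, e 1, rfl⟩
    rw [hbot, Submodule.mem_bot] at m4
    have := congrFun m4 5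
    rw [br_eq] at this
    simp [br_eq, e_eq, cv0, cv1, cv2, cv3, cv4, cv5] at this
  · intro h
    have := h (e 0) (e 1) (e 0) (e 1) (e 0)
    rw [key] at this
    exact e5ne this
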